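/- Assume additionally that the weight of the root of T is even and at least 4. Then Σ_{v ∈ V} (D'(v) − E(v)) ≤ Σ_{v ∈ V} d(v); in particular, Σ_{v ∈ V} D'(v) ≤ Σ_{v ∈ V} d(v). -/

import Mathlib

open Finset

private lemma natCast_zmod2_eq_zero (n : ℕ) (h : n % 2 = 0) : (n : ZMod 2) = 0 := by
  rw [← ZMod.natCast_mod n 2, h, Nat.cast_zero]

private lemma natCast_zmod2_eq_one (n : ℕ) (h : n % 2 = 1) : (n : ZMod 2) = 1 := by
  rw [← ZMod.natCast_mod n 2, h, Nat.cast_one]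

private lemma zmod2_cases (x : ZMod 2) : x = 0 ∨ x = 1 := by revert x; decide

private lemma sum_ite_const {V : Type*} (s : Finset V) (p : V → Prop) [DecidablePred p]
    (a b : ℤ) :
    ∑ w ∈ s, (if p w then a else b) =
      ((s.filter p).card : ℤ) * a + ((s.filter fun w => ¬ p w).card : ℤ) * b := by
  rw [Finset.sum_ite, Finset.sum_const, Finset.sum_const]
  simp [nsmul_eq_mul]

private lemma telescope {V : Type} [Fintype V] [DecidableEq V]
    (root : V) (parent : V → V) (C : V → Finset V)
    (hC : ∀ v w, w ∈ C v ↔ w ≠ root ∧ parent w = v)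
    (F ψ : V → ℤ) (hψroot : ψ root = 0)
    (h : ∀ v, ∑ w ∈ C v, ψ w ≤ F v + ψ v) : 0 ≤ ∑ v, F v := by
  classical
  have hCeq : ∀ v, C v = (univ.filter (fun w => ¬ w = root)).filter (fun w => parent w = v) := by
    intro v; ext w
    simp only [hC, Finset.mem_filter, Finset.mem_univ, true_and, ne_eq]
  have hfib : ∑ v, ∑ w ∈ C v, ψ w = ∑ w ∈ univ.filter (fun w => ¬ w = root), ψ w := by
    calc ∑ v, ∑ w ∈ C v, ψ w
        = ∑ v, ∑ w ∈ (univ.filter (fun w => ¬ w = root)).filter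
            (fun w => parent w = v), ψ w :=
          Finset.sum_congr rfl (fun v _ => by rw [hCeq v])
      _ = _ := Finset.sum_fiberwise _ _ _
  have hsplit := Finset.sum_filter_add_sum_filter_not univ (fun w => ¬ w = root) ψ
  have h2 : univ.filter (fun w : V => ¬ ¬ w = root) = {root} := by ext w; simp
  rw [h2, Finset.sum_singleton] at hsplit
  have hmain : 0 ≤ ∑ v, (F v + ψ v - ∑ w ∈ C v, ψ w) :=
    Finset.sum_nonneg fun v _ => by linarith [h v]
  rw [Finset.sum_sub_distrib, Finset.sum_add_distrib, hfib] at hmain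
  linarith

theorem stmt_13
    (V : Type) [Fintype V] [DecidableEq V]
    (root : V) (parent : V → V) (depth : V → ℕ)
    (hdepth_root : depth root = 0)
    (hdepth : ∀ v, v ≠ root → depth v = depth (parent v) + 1)
    (C : V → Finset V)
    (hC : ∀ v w, w ∈ C v ↔ w ≠ root ∧ parent w = v)
    (l' wt : V → ℕ)
    (hwt : ∀ v, wt v = l' v + ∑ w ∈ C v, wt w)
    (hwt2 : ∀ v, 2 ≤ wt v)
    (r s l : V → ℕ)
    (hr : ∀ v, r v = ((C v).filter fun w => Odd (wt w)).card)
    (hs : ∀ v, s v = ((C v).filter fun w => Even (wt w)).card)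
    (hl : ∀ v, l v = l' v + r v)
    (ε : V → ZMod 2)
    (hεroot : ε root = 0)
    (hε : ∀ w, w ≠ root → ε w = ε (parent w) + (wt w : ZMod 2))
    (d : V → ℤ)
    (hd : ∀ v, d v = ∑ w ∈ C v, (wt w : ℤ) * ((wt w : ℤ) - 1))
    (D' : V → ℤ)
    (hD'_even : ∀ v, ε v = 0 → D' v =
      2 * (s v : ℤ) + ∑ w ∈ (C v).filter (fun w => ε w = 1), (wt w : ℤ) * ((wt w : ℤ) - 1))
    (hD'_odd : ∀ v, ε v = 1 → D' v =
      2 * ((l v : ℤ) + (s v : ℤ)) - (wt v : ℤ) * ((wt v : ℤ) - 1) +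
        ∑ w ∈ (C v).filter (fun w => ε w = 1), (wt w : ℤ) * ((wt w : ℤ) - 1))
    (E : V → ℤ)
    (hE_even : ∀ v, ε v = 0 → E v =
      -((l v % 2 : ℕ) : ℤ) -
        ∑ w ∈ (C v).filter (fun w => ε w = 1), (2 - (wt w : ℤ) * ((wt w : ℤ) - 1)))
    (hE_odd_evenpar : ∀ v, ε v = 1 → ε (parent v) = 0 → E v =
      (r v : ℤ) + (s v : ℤ) + 2 - (wt v : ℤ) * ((wt v : ℤ) - 1) -
        ∑ w ∈ (C v).filter (fun w => ε w = 1), (2 - (wt w : ℤ) * ((wt w : ℤ) - 1)))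
    (hE_odd_oddpar : ∀ v, ε v = 1 → ε (parent v) = 1 → E v =
      (r v : ℤ) + (s v : ℤ) + 1 - (wt v : ℤ) * ((wt v : ℤ) - 1) -
        ∑ w ∈ (C v).filter (fun w => ε w = 1), (2 - (wt w : ℤ) * ((wt w : ℤ) - 1)))
    (hrootwt_even : Even (wt root)) (hrootwt4 : 4 ≤ wt root) :
    (∑ v, (D' v - E v)) ≤ ∑ v, d v ∧ (∑ v, D' v) ≤ ∑ v, d v := by
  classical
  have hlz : ∀ v, (l v : ℤ) = l' v + r v := fun v => by rw [hl v]; push_cast; ring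
  have hwz : ∀ v, (wt v : ℤ) = l' v + ∑ w ∈ C v, (wt w : ℤ) := fun v => by
    rw [hwt v]; push_cast; ring
  have hchild : ∀ v w, w ∈ C v → ε w = ε v + (wt w : ZMod 2) := by
    intro v w hw
    obtain ⟨hwr, hwp⟩ := (hC v w).1 hw
    rw [hε w hwr, hwp]
  have hfne : ∀ v, ((C v).filter fun w => ¬ Odd (wt w)) = ((C v).filter fun w => Even (wt w)) := by
    intro v
    apply Finset.filter_congr
    intro w _
    exact Nat.not_odd_iff_even
  have hrc : ∀ v, ((((C v).filter fun w => Odd (wt w)).card : ℕ) : ℤ) = r v := fun v => by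
    rw [hr v]
  have hsc : ∀ v, ((((C v).filter fun w => ¬ Odd (wt w)).card : ℕ) : ℤ) = s v := fun v => by
    rw [hfne v, hs v]
  have hse : ∀ v, ((((C v).filter fun w => Even (wt w)).card : ℕ) : ℤ) = s v := fun v => by
    rw [hs v]
  have hcard : ∀ v, (((C v).card : ℕ) : ℤ) = r v + s v := by
    intro v
    have hn := Finset.card_filter_add_card_filter_not
      (s := C v) (p := fun w => Odd (wt w))
    have : (((C v).card : ℕ) : ℤ) =
        ((((C v).filter fun w => Odd (wt w)).card : ℕ) : ℤ) +
        ((((C v).filter fun w => ¬ Odd (wt w)).card : ℕ) : ℤ) := by exact_mod_cast hn.symm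
    rw [this, hrc v, hsc v]
  have hparity : ∀ v, wt v % 2 = l v % 2 := by
    intro v
    have hA : (∑ w ∈ C v, wt w) % 2 = r v % 2 := by
      rw [Finset.sum_nat_mod]
      have hcf : ∑ w ∈ C v, wt w % 2 = ((C v).filter fun w => Odd (wt w)).card := by
        rw [Finset.card_filter]
        refine Finset.sum_congr rfl fun w _ => ?_
        rcases Nat.even_or_odd (wt w) with h | h
        · rw [Nat.even_iff.mp h, if_neg (Nat.not_odd_iff_even.mpr h)]
        · rw [Nat.odd_iff.mp h, if_pos h]
      rw [hcf, ← hr v]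
    have h1 := hwt v
    have h2 := hl v
    omega
  have hfilter_even : ∀ v, ε v = 0 →
      ((C v).filter fun w => ε w = 1) = ((C v).filter fun w => Odd (wt w)) := by
    intro v hv
    apply Finset.filter_congr
    intro w hw
    rw [hchild v w hw, hv, zero_add]
    constructor
    · intro h
      rcases Nat.even_or_odd (wt w) with he | ho
      · rw [natCast_zmod2_eq_zero _ (Nat.even_iff.mp he)] at h
        exact absurd h (by decide)
      · exact ho
    · intro h
      exact natCast_zmod2_eq_one _ (Nat.odd_iff.mp h)
  have hfilter_odd : ∀ v, ε v = 1 →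
      ((C v).filter fun w => ε w = 1) = ((C v).filter fun w => Even (wt w)) := by
    intro v hv
    apply Finset.filter_congr
    intro w hw
    rw [hchild v w hw, hv]
    constructor
    · intro h
      rcases Nat.even_or_odd (wt w) with he | ho
      · exact he
      · rw [natCast_zmod2_eq_one _ (Nat.odd_iff.mp ho)] at h
        exact absurd h (by decide)
    · intro h
      rw [natCast_zmod2_eq_zero _ (Nat.even_iff.mp h), add_zero]
  set φ : V → ℤ := fun v => if ε v = 1 ∧ wt v = 2 then 2 else 0 with hφdef
  set ψ : V → ℤ := fun v =>
    if ε v = 0 then ((wt v % 2 : ℕ) : ℤ)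
    else 2 * (wt v : ℤ) - (if Odd (wt v) then 2 else 1) with hψdef
  have hψroot : ψ root = 0 := by
    simp only [hψdef]
    rw [if_pos hεroot, Nat.even_iff.mp hrootwt_even, Nat.cast_zero]
  have hφroot : φ root = 0 := by
    simp only [hφdef]
    rw [if_neg]
    rintro ⟨h1, _⟩
    exact absurd (hεroot.symm.trans h1) (by decide)
  -- key inequality for φ
  have keyφ : ∀ v, ∑ w ∈ C v, φ w ≤ (d v - D' v) + φ v := by
    intro v
    have hφv : (0:ℤ) ≤ φ v := by simp only [hφdef]; split <;> norm_num
    rcases zmod2_cases (ε v) with hv | hv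
    · -- even vertex
      have hch0 : ∀ w ∈ C v, φ w = 0 := by
        intro w hw
        simp only [hφdef]
        rw [if_neg]
        rintro ⟨h1, h2⟩
        have hcw : (wt w : ZMod 2) = 0 := by rw [h2]; decide
        rw [hchild v w hw, hv, hcw, add_zero] at h1
        exact absurd h1 (by decide)
      have hsum0 : ∑ w ∈ C v, φ w = 0 := Finset.sum_eq_zero hch0
      rw [hsum0, hd v, hD'_even v hv, hfilter_even v hv]
      have hsplit := Finset.sum_filter_add_sum_filter_not (C v) (fun w => Odd (wt w))
          (fun w => (wt w : ℤ) * ((wt w : ℤ) - 1))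
      have hlow : 2 * (s v : ℤ) ≤
          ∑ w ∈ (C v).filter (fun w => ¬ Odd (wt w)), (wt w : ℤ) * ((wt w : ℤ) - 1) := by
        have hpt : ∀ w ∈ (C v).filter (fun w => ¬ Odd (wt w)),
            (2:ℤ) ≤ (wt w : ℤ) * ((wt w : ℤ) - 1) := by
          intro w _
          have hw2 : (2:ℤ) ≤ (wt w : ℤ) := by exact_mod_cast hwt2 w
          nlinarith
        have hh := Finset.sum_le_sum hpt
        rw [Finset.sum_const, nsmul_eq_mul, hsc v] at hh
        linarith
      linarith [hsplit, hlow, hφv]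
    · -- odd vertex
      rw [hd v, hD'_odd v hv, hfilter_odd v hv]
      have hchb : ∀ w ∈ C v, φ w ≤ (if Odd (wt w) then (0:ℤ) else 2) := by
        intro w _
        simp only [hφdef]
        rcases Nat.even_or_odd (wt w) with he | ho
        · rw [if_neg (Nat.not_odd_iff_even.mpr he)]
          split <;> norm_num
        · rw [if_pos ho,
            if_neg (by rintro ⟨-, h2⟩; rw [h2] at ho; exact (by decide : ¬ Odd 2) ho)]
      have hchsum := Finset.sum_le_sum hchb
      rw [sum_ite_const (C v) (fun w => Odd (wt w)) 0 2, hrc v, hsc v] at hchsum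
      have hAlow : 3 * (r v:ℤ) + 2 * (s v:ℤ) ≤ ∑ w ∈ C v, (wt w:ℤ) := by
        have hpt : ∀ w ∈ C v, (if Odd (wt w) then (3:ℤ) else 2) ≤ (wt w:ℤ) := by
          intro w _
          have hw2 : (2:ℤ) ≤ (wt w:ℤ) := by exact_mod_cast hwt2 w
          split
          · next ho =>
              have h3 : 3 ≤ wt w := by
                have := Nat.odd_iff.mp ho; have := hwt2 w; omega
              exact_mod_cast h3
          · exact hw2
        have hh := Finset.sum_le_sum hpt
        rw [sum_ite_const (C v) (fun w => Odd (wt w)) 3 2, hrc v, hsc v] at hh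
        linarith
      have hsplit := Finset.sum_filter_add_sum_filter_not (C v) (fun w => Even (wt w))
          (fun w => (wt w : ℤ) * ((wt w : ℤ) - 1))
      have hrest : 0 ≤ ∑ w ∈ (C v).filter (fun w => ¬ Even (wt w)),
          (wt w:ℤ) * ((wt w:ℤ) - 1) :=
        Finset.sum_nonneg fun w _ => by
          have hw2 : (2:ℤ) ≤ (wt w:ℤ) := by exact_mod_cast hwt2 w
          nlinarith
      have hwzv := hwz v
      have hlzv := hlz v
      have hl'nn : (0:ℤ) ≤ (l' v : ℤ) := Int.natCast_nonneg _
      have hrnn : (0:ℤ) ≤ (r v : ℤ) := Int.natCast_nonneg _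
      rcases eq_or_lt_of_le (hwt2 v) with h2 | h3
      · -- wt v = 2
        have hφv2 : φ v = 2 := by simp only [hφdef]; rw [if_pos ⟨hv, h2.symm⟩]
        have hw2z : (wt v : ℤ) = 2 := by exact_mod_cast h2.symm
        rw [hφv2, hw2z]
        rw [hw2z] at hwzv
        linarith [hchsum, hAlow, hsplit, hrest]
      · -- wt v ≥ 3
        have hw3 : (3:ℤ) ≤ (wt v:ℤ) := by exact_mod_cast h3
        nlinarith [hchsum, hAlow, hsplit, hrest, hφv, hwzv, hlzv, hl'nn, hrnn,
          mul_nonneg (sub_nonneg.mpr hw3) (by positivity : (0:ℤ) ≤ (wt v:ℤ))]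
  -- key inequality for ψ
  have keyψ : ∀ v, ∑ w ∈ C v, ψ w ≤ (d v - D' v + E v) + ψ v := by
    intro v
    rcases zmod2_cases (ε v) with hv | hv
    · -- even vertex
      rw [hd v, hD'_even v hv, hE_even v hv, hfilter_even v hv]
      have hψv : ψ v = ((wt v % 2 : ℕ):ℤ) := by simp only [hψdef]; rw [if_pos hv]
      have hlv : ((l v % 2 : ℕ):ℤ) = ((wt v % 2 : ℕ):ℤ) := by rw [hparity v]
      have hfo : ∑ w ∈ (C v).filter (fun w => Odd (wt w)), (2 - (wt w:ℤ) * ((wt w:ℤ) - 1))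
          = (r v : ℤ) * 2 -
            ∑ w ∈ (C v).filter (fun w => Odd (wt w)), (wt w:ℤ) * ((wt w:ℤ) - 1) := by
        rw [Finset.sum_sub_distrib, Finset.sum_const, nsmul_eq_mul, hrc v]
      have hpt : ∀ w ∈ C v, ψ w + 2 ≤ (wt w:ℤ) * ((wt w:ℤ) - 1) := by
        intro w hw
        have hw2 : (2:ℤ) ≤ (wt w:ℤ) := by exact_mod_cast hwt2 w
        have hεw := hchild v w hw
        rw [hv, zero_add] at hεw
        rcases Nat.even_or_odd (wt w) with he | ho
        · have hε0 : ε w = 0 := by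
            rw [hεw]; exact natCast_zmod2_eq_zero _ (Nat.even_iff.mp he)
          have hψw : ψ w = ((wt w % 2 : ℕ):ℤ) := by simp only [hψdef]; rw [if_pos hε0]
          rw [hψw, Nat.even_iff.mp he, Nat.cast_zero]
          nlinarith
        · have hε1 : ε w ≠ 0 := by
            rw [hεw, natCast_zmod2_eq_one _ (Nat.odd_iff.mp ho)]; decide
          have hψw : ψ w = 2 * (wt w:ℤ) - (if Odd (wt w) then 2 else 1) := by
            simp only [hψdef]; rw [if_neg hε1]
          rw [hψw, if_pos ho]
          have hw3 : (3:ℤ) ≤ (wt w:ℤ) := by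
            have h1 := Nat.odd_iff.mp ho
            have h2 := hwt2 w
            exact_mod_cast (show 3 ≤ wt w by omega)
          nlinarith
      have hsum := Finset.sum_le_sum hpt
      rw [Finset.sum_add_distrib, Finset.sum_const, nsmul_eq_mul, hcard v] at hsum
      rw [hψv, hlv, hfo]
      linarith [hsum]
    · -- odd vertex
      have hvroot : v ≠ root := by
        intro h
        rw [h, hεroot] at hv
        exact absurd hv (by decide)
      have hpε := hε v hvroot
      rw [hd v, hD'_odd v hv, hfilter_odd v hv]
      have hψv : ψ v = 2 * (wt v:ℤ) - (if Odd (wt v) then 2 else 1) := by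
        simp only [hψdef]
        rw [if_neg (by rw [hv]; decide)]
      have hEv : E v = (r v : ℤ) + s v + (if Odd (wt v) then (2:ℤ) else 1)
          - (wt v : ℤ) * ((wt v:ℤ) - 1)
          - ∑ w ∈ (C v).filter (fun w => Even (wt w)), (2 - (wt w:ℤ) * ((wt w:ℤ) - 1)) := by
        rcases Nat.even_or_odd (wt v) with h | h
        · have hp : ε (parent v) = 1 := by
            rw [natCast_zmod2_eq_zero _ (Nat.even_iff.mp h), add_zero] at hpε
            rw [← hpε, hv]
          rw [hE_odd_oddpar v hv hp, hfilter_odd v hv, if_neg (Nat.not_odd_iff_even.mpr h)]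
        · have hp : ε (parent v) = 0 := by
            rw [natCast_zmod2_eq_one _ (Nat.odd_iff.mp h), hv] at hpε
            exact add_eq_right.mp hpε.symm
          rw [hE_odd_evenpar v hv hp, hfilter_odd v hv, if_pos h]
      have hfe : ∑ w ∈ (C v).filter (fun w => Even (wt w)), (2 - (wt w:ℤ) * ((wt w:ℤ) - 1))
          = (s v : ℤ) * 2 -
            ∑ w ∈ (C v).filter (fun w => Even (wt w)), (wt w:ℤ) * ((wt w:ℤ) - 1) := by
        rw [Finset.sum_sub_distrib, Finset.sum_const, nsmul_eq_mul, hse v]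
      have hpt : ∀ w ∈ C v, ψ w + (if Odd (wt w) then (1:ℤ) else 3) ≤
          (wt w:ℤ) * ((wt w:ℤ) - 1) + 2 * (wt w:ℤ) := by
        intro w hw
        have hw2 : (2:ℤ) ≤ (wt w:ℤ) := by exact_mod_cast hwt2 w
        have hεw := hchild v w hw
        rw [hv] at hεw
        rcases Nat.even_or_odd (wt w) with he | ho
        · have hε1 : ε w ≠ 0 := by
            rw [hεw, natCast_zmod2_eq_zero _ (Nat.even_iff.mp he), add_zero]; decide
          have hψw : ψ w = 2 * (wt w:ℤ) - (if Odd (wt w) then 2 else 1) := by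
            simp only [hψdef]; rw [if_neg hε1]
          rw [hψw, if_neg (Nat.not_odd_iff_even.mpr he), if_neg (Nat.not_odd_iff_even.mpr he)]
          nlinarith
        · have hε0 : ε w = 0 := by
            rw [hεw, natCast_zmod2_eq_one _ (Nat.odd_iff.mp ho)]; decide
          have hψw : ψ w = ((wt w % 2 : ℕ):ℤ) := by simp only [hψdef]; rw [if_pos hε0]
          rw [hψw, Nat.odd_iff.mp ho, Nat.cast_one, if_pos ho]
          nlinarith
      have hsum := Finset.sum_le_sum hpt
      rw [Finset.sum_add_distrib, Finset.sum_add_distrib,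
        sum_ite_const (C v) (fun w => Odd (wt w)) 1 3, hrc v, hsc v,
        ← Finset.mul_sum] at hsum
      rw [hEv, hψv, hfe]
      linarith [hsum, hwz v, hlz v]
  have T1 := telescope root parent C hC (fun v => d v - D' v + E v) ψ hψroot keyψ
  have T2 := telescope root parent C hC (fun v => d v - D' v) φ hφroot keyφ
  constructor
  · have h1 : (0:ℤ) ≤ ∑ v, (d v - D' v + E v) := T1
    rw [Finset.sum_add_distrib, Finset.sum_sub_distrib] at h1
    have h2 : ∑ v, (D' v - E v) = ∑ v, D' v - ∑ v, E v := Finset.sum_sub_distrib _ _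
    linarith
  · have h1 : (0:ℤ) ≤ ∑ v, (d v - D' v) := T2
    rw [Finset.sum_sub_distrib] at h1
    linarith
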